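/- Let m ≥ 1 and n ≥ 1 be integers and let A₁, …, A_{n+1} be complex m×m matrices with |det A_{n+1}| = 1 (for instance, A_{n+1} a permutation matrix). Let L be the (n+1)m × (n+1)m block matrix whose (s, 1) block is A_s for s = 1, …, n+1, whose (s, s+1) block is −E (the negative of the m×m identity matrix) for s = 1, …, n, and all of whose other blocks are zero. Then L has an eigenvalue λ ∈ ℂ with |λ| ≥ 1; that is, the spectral radius of L is at least 1. -/

import Mathlib

section LoewyAux
open Matrix Polynomial

noncomputable def loewyAux (m n : ℕ) (A : Fin (n + 1) → Matrix (Fin m) (Fin m) ℂ) :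
    Matrix (Fin (n + 1) × Fin m) (Fin (n + 1) × Fin m) ℂ :=
  fun p q =>
    if q.1 = 0 then A p.1 p.2 q.2
    else if (q.1 : ℕ) = (p.1 : ℕ) + 1 then (if p.2 = q.2 then -1 else 0)
    else 0

lemma loewyAux_abs_det (m : ℕ) :
    ∀ n (A : Fin (n + 1) → Matrix (Fin m) (Fin m) ℂ),
      ‖(loewyAux m n A).det‖ = ‖(A (Fin.last n)).det‖ := by
  intro n
  induction n with
  | zero =>
    intro A
    have : loewyAux m 0 A = (A 0).submatrix
        ((Equiv.prodComm (Fin 1) (Fin m)).trans (Equiv.prodUnique (Fin m) (Fin 1)))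
        ((Equiv.prodComm (Fin 1) (Fin m)).trans (Equiv.prodUnique (Fin m) (Fin 1))) := by
      ext p q
      have hq : q.1 = 0 := Fin.fin_one_eq_zero _
      have hp : p.1 = 0 := Fin.fin_one_eq_zero _
      simp only [loewyAux, submatrix_apply, hq, if_pos rfl, hp]
      rfl
    rw [this, Matrix.det_submatrix_equiv_self]
    rfl
  | succ n ih =>
    intro A
    set B : Fin (n + 1) → Matrix (Fin m) (Fin m) ℂ :=
      fun r => if r = Fin.last n then A (Fin.last (n + 1)) else A r.castSucc with hB
    set rowmap : Fin (n + 1) → Fin (n + 2) :=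
      fun r => if r = Fin.last n then Fin.last (n + 1) else r.castSucc with hrowmap
    have hrowval : ∀ r : Fin (n + 1), (rowmap r : ℕ) = if (r : ℕ) = n then n + 1 else (r : ℕ) := by
      intro r
      by_cases h : r = Fin.last n
      · simp [hrowmap, h, Fin.last]
      · have : (r : ℕ) ≠ n := fun hc => h (Fin.ext hc)
        simp [hrowmap, h, this]
    have hcard : Fintype.card ((Fin (n + 1) × Fin m) ⊕ Fin m)
        = Fintype.card (Fin (n + 2) × Fin m) := by simp; ring
    let fR : (Fin (n + 1) × Fin m) ⊕ Fin m → Fin (n + 2) × Fin m :=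
      Sum.elim (fun p => (rowmap p.1, p.2)) (fun i => (⟨n, by omega⟩, i))
    let fC : (Fin (n + 1) × Fin m) ⊕ Fin m → Fin (n + 2) × Fin m :=
      Sum.elim (fun p => (p.1.castSucc, p.2)) (fun i => (Fin.last (n + 1), i))
    have hfR : Function.Injective fR := by
      rintro (⟨r, i⟩ | i) (⟨s, j⟩ | j) h <;>
        simp only [fR, Sum.elim_inl, Sum.elim_inr, Prod.mk.injEq] at h
      · obtain ⟨h1, h2⟩ := h
        have hval : (rowmap r : ℕ) = (rowmap s : ℕ) := by rw [h1]
        rw [hrowval, hrowval] at hval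
        have hr1 := r.isLt; have hs1 := s.isLt
        have hr : r = s := by
          apply Fin.ext
          split_ifs at hval <;> omega
        simp [hr, h2]
      · exfalso
        have hval : (rowmap r : ℕ) = n := by rw [h.1]
        rw [hrowval] at hval
        have hr1 := r.isLt
        split_ifs at hval <;> omega
      · exfalso
        have hval : n = (rowmap s : ℕ) := by rw [← h.1]
        rw [hrowval] at hval
        have hs1 := s.isLt
        split_ifs at hval <;> omega
      · simp [h.2]
    have hfC : Function.Injective fC := by
      rintro (⟨r, i⟩ | i) (⟨s, j⟩ | j) h <;>
        simp only [fC, Sum.elim_inl, Sum.elim_inr, Prod.mk.injEq] at h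
      · obtain ⟨h1, h2⟩ := h
        simp [Fin.castSucc_inj.mp h1, h2]
      · exfalso
        have hval : ((r.castSucc : Fin (n + 2)) : ℕ) = n + 1 := by rw [h.1]; rfl
        have hv2 : ((r.castSucc : Fin (n + 2)) : ℕ) = (r : ℕ) := rfl
        have hr1 := r.isLt
        omega
      · exfalso
        have hval : ((s.castSucc : Fin (n + 2)) : ℕ) = n + 1 := by rw [← h.1]; rfl
        have hv2 : ((s.castSucc : Fin (n + 2)) : ℕ) = (s : ℕ) := rfl
        have hs1 := s.isLt
        omega
      · simp [h.2]
    let eR : ((Fin (n + 1) × Fin m) ⊕ Fin m) ≃ Fin (n + 2) × Fin m :=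
      Equiv.ofBijective fR ((Fintype.bijective_iff_injective_and_card fR).mpr ⟨hfR, hcard⟩)
    let eC : ((Fin (n + 1) × Fin m) ⊕ Fin m) ≃ Fin (n + 2) × Fin m :=
      Equiv.ofBijective fC ((Fintype.bijective_iff_injective_and_card fC).mpr ⟨hfC, hcard⟩)
    have key : (loewyAux m (n + 1) A).submatrix eR eC =
        fromBlocks (loewyAux m n B) 0
          (Matrix.of fun (i : Fin m) (q : Fin (n + 1) × Fin m) =>
            loewyAux m (n + 1) A (⟨n, by omega⟩, i) (q.1.castSucc, q.2))
          (-1) := by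
      ext x y
      rcases x with ⟨r, i⟩ | i <;> rcases y with ⟨s, j⟩ | j
      · -- top-left
        show loewyAux m (n + 1) A (rowmap r, i) (s.castSucc, j) = loewyAux m n B (r, i) (s, j)
        by_cases hs0 : s = 0
        · have : s.castSucc = 0 := by simp [hs0]
          simp only [loewyAux, hs0, this, if_pos rfl]
          by_cases hr : r = Fin.last n <;> simp [hrowmap, hB, hr]
        · have h1 : s.castSucc ≠ 0 := by
            intro h; apply hs0; ext; have := congrArg Fin.val h; simpa using this
          simp only [loewyAux, if_neg hs0, if_neg h1]
          have hv : ((s.castSucc : Fin (n + 2)) : ℕ) = (s : ℕ) := rfl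
          by_cases hr : (r : ℕ) = n
          · have c1 : ¬ ((s.castSucc : Fin (n + 2)) : ℕ) = (rowmap r : ℕ) + 1 := by
              rw [hv, hrowval, hr, if_pos rfl]; have := s.isLt; omega
            have c2 : ¬ (s : ℕ) = (r : ℕ) + 1 := by have := s.isLt; omega
            rw [if_neg c1, if_neg c2]
          · have hrv : (rowmap r : ℕ) = (r : ℕ) := by rw [hrowval]; simp [hr]
            rw [hv, hrv]
      · -- top-right
        show loewyAux m (n + 1) A (rowmap r, i) (Fin.last (n + 1), j) = 0
        have h1 : (Fin.last (n + 1) : Fin (n + 2)) ≠ 0 := by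
          simp [Fin.ext_iff]
        have h2 : ¬ ((Fin.last (n + 1) : Fin (n + 2)) : ℕ) = (rowmap r : ℕ) + 1 := by
          rw [hrowval]
          have := r.isLt
          show ¬ (n + 1 = _)
          split_ifs <;> omega
        show (if (Fin.last (n + 1) : Fin (n + 2)) = 0 then A (rowmap r) i j
          else if ((Fin.last (n + 1) : Fin (n + 2)) : ℕ) = (rowmap r : ℕ) + 1
            then (if i = j then (-1 : ℂ) else 0) else 0) = 0
        rw [if_neg h1, if_neg h2]
      · -- bottom-left
        rfl
      · -- bottom-right
        show loewyAux m (n + 1) A (⟨n, by omega⟩, i) (Fin.last (n + 1), j)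
          = (-1 : Matrix (Fin m) (Fin m) ℂ) i j
        have h1 : (Fin.last (n + 1) : Fin (n + 2)) ≠ 0 := by simp [Fin.ext_iff]
        have h2 : ((Fin.last (n + 1) : Fin (n + 2)) : ℕ) = n + 1 := rfl
        simp only [loewyAux, if_neg h1, h2, if_pos rfl]
        simp [Matrix.neg_apply, Matrix.one_apply]
        split_ifs <;> simp
    have h2 : (loewyAux m (n + 1) A).submatrix eR eC
        = ((loewyAux m (n + 1) A).submatrix eC eC).submatrix (eR.trans eC.symm) id := by
      ext x y
      simp [Matrix.submatrix_apply]
    have habs1 : ‖(loewyAux m (n + 1) A).det‖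
        = ‖((loewyAux m (n + 1) A).submatrix eR eC).det‖ := by
      rw [h2, Matrix.det_permute, Matrix.det_submatrix_equiv_self]
      rcases Int.units_eq_one_or (Equiv.Perm.sign (eR.trans eC.symm)) with h | h <;>
        simp [h]
    rw [habs1, key, Matrix.det_fromBlocks_zero₁₂, norm_mul]
    have hdn : ‖((-1 : Matrix (Fin m) (Fin m) ℂ)).det‖ = 1 := by
      have : (-1 : Matrix (Fin m) (Fin m) ℂ) = -(1 : Matrix (Fin m) (Fin m) ℂ) := rfl
      rw [this, Matrix.det_neg, Matrix.det_one, mul_one, norm_pow]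
      simp
    rw [hdn, mul_one, ih B]
    have : B (Fin.last n) = A (Fin.last (n + 1)) := by simp [hB]
    rw [this]

lemma evalCharpolyAux {N : Type*} [Fintype N] [DecidableEq N] (M : Matrix N N ℂ) (μ : ℂ) :
    M.charpoly.eval μ = (Matrix.scalar N μ - M).det := by
  rw [Matrix.charpoly, _root_.eval_det, matPolyEquiv_charmatrix]
  simp

lemma rootMemSpectrumAux {N : Type*} [Fintype N] [DecidableEq N] (M : Matrix N N ℂ) (μ : ℂ)
    (h : M.charpoly.IsRoot μ) : μ ∈ spectrum ℂ M := by
  rw [spectrum.mem_iff]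
  intro hu
  rw [Matrix.isUnit_iff_isUnit_det] at hu
  have halg : algebraMap ℂ (Matrix N N ℂ) μ = Matrix.scalar N μ := rfl
  rw [halg] at hu
  have h0 : (Matrix.scalar N μ - M).det = 0 := by
    rw [← evalCharpolyAux]; exact h
  rw [h0] at hu
  exact (not_isUnit_zero hu : False)

lemma prodLtOneAux (s : Multiset ℂ) (h : ∀ x ∈ s, ‖x‖ < 1) (hs : s ≠ 0) :
    ‖s.prod‖ < 1 := by
  induction s using Multiset.induction with
  | empty => exact absurd rfl hs
  | cons a t ih =>
    rw [Multiset.prod_cons, norm_mul]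
    have ha := h a (Multiset.mem_cons_self a t)
    by_cases ht : t = 0
    · subst ht; simpa using ha
    · have hta := ih (fun x hx => h x (Multiset.mem_cons_of_mem hx)) ht
      calc ‖a‖ * ‖t.prod‖
          ≤ 1 * ‖t.prod‖ :=
            mul_le_mul_of_nonneg_right ha.le (norm_nonneg _)
        _ = ‖t.prod‖ := one_mul _
        _ < 1 := hta

theorem loewy_matrix_spectral_radius_ge_one'
    (m n : ℕ) (hm : 1 ≤ m) (hn : 1 ≤ n)
    (A : Fin (n + 1) → Matrix (Fin m) (Fin m) ℂ)
    (hA : ‖(A (Fin.last n)).det‖ = 1)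
    (L : Matrix (Fin (n + 1) × Fin m) (Fin (n + 1) × Fin m) ℂ)
    (hL : ∀ p q, L p q =
      if q.1 = 0 then A p.1 p.2 q.2
      else if (q.1 : ℕ) = (p.1 : ℕ) + 1 then (if p.2 = q.2 then -1 else 0)
      else 0) :
    ∃ μ : ℂ, μ ∈ spectrum ℂ L ∧ 1 ≤ ‖μ‖ := by
  have hLe : L = loewyAux m n A := by
    ext p q; rw [hL]; rfl
  have habs : ‖L.det‖ = 1 := by
    rw [hLe, loewyAux_abs_det m n A, hA]
  by_contra hcon
  push_neg at hcon
  have hdet : L.det = L.charpoly.roots.prod := Matrix.det_eq_prod_roots_charpoly L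
  have hroots : ∀ x ∈ L.charpoly.roots, ‖x‖ < 1 := by
    intro x hx
    exact hcon x (rootMemSpectrumAux L x (Polynomial.isRoot_of_mem_roots hx))
  have hne : L.charpoly.roots ≠ 0 := by
    have hcardr : Multiset.card L.charpoly.roots = Fintype.card (Fin (n + 1) × Fin m) := by
      rw [← Matrix.charpoly_natDegree_eq_dim L]
      exact Polynomial.splits_iff_card_roots.mp (IsAlgClosed.splits _)
    intro h0
    rw [h0] at hcardr
    simp [Fintype.card_prod] at hcardr
    omega
  have hlt := prodLtOneAux _ hroots hne
  rw [← hdet, habs] at hlt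
  exact absurd hlt (by norm_num)

end LoewyAux


/-- Let `A₁, …, A_{n+1}` be complex `m × m` matrices with `|det A_{n+1}| = 1` (e.g. a
permutation matrix), and let `L` be the `(n+1)m × (n+1)m` block matrix whose `(s, 1)`
block is `A_s` for `s = 1, …, n+1`, whose `(s, s+1)` block is `-E` (minus the `m × m`
identity) for `s = 1, …, n`, and all of whose other blocks are zero. Then `L` has an
eigenvalue `λ` with `|λ| ≥ 1`: the spectral radius of `L` is at least `1`. -/
theorem loewy_matrix_spectral_radius_ge_one
    (m n : ℕ) (hm : 1 ≤ m) (hn : 1 ≤ n)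
    (A : Fin (n + 1) → Matrix (Fin m) (Fin m) ℂ)
    (hA : ‖(A (Fin.last n)).det‖ = 1)
    (L : Matrix (Fin (n + 1) × Fin m) (Fin (n + 1) × Fin m) ℂ)
    (hL : ∀ p q, L p q =
      if q.1 = 0 then A p.1 p.2 q.2
      else if (q.1 : ℕ) = (p.1 : ℕ) + 1 then (if p.2 = q.2 then -1 else 0)
      else 0) :
    ∃ μ : ℂ, μ ∈ spectrum ℂ L ∧ 1 ≤ ‖μ‖ :=
  loewy_matrix_spectral_radius_ge_one' m n hm hn A hA L hL
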